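/- For every integer k ≥ 2, G(3·2^{k-1}−3, k) < G(3·2^{k-1}−2, k). (Thus the sequence (G(n,k))_{n≥k} is not yet constant at 3·2^{k-1}−3, i.e. n(k) ≥ 3·2^{k-1}−2.) -/

import Mathlib

/-- Negate the `i`-th coordinate of a vertex `x` of the hypercube `{-1,1}^n`
(coordinates are `ℤˣ = {-1,1}`). -/
def flipCoord {n : ℕ} (x : Fin n → ℤˣ) (i : Fin n) : Fin n → ℤˣ :=
  Function.update x i (-(x i))

/-- `f` is a `k`-function: every vertex has exactly `k` neighbours where `f` differs. -/
def IsKFun {n : ℕ} {β : Type*} (k : ℕ) (f : (Fin n → ℤˣ) → β) : Prop :=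
  ∀ x, Set.ncard {i : Fin n | f (flipCoord x i) ≠ f x} = k

/-- `F n k`: the number of `k`-functions on `Q_n`. -/
noncomputable def numKFun (n k : ℕ) : ℕ :=
  Nat.card {f : (Fin n → ℤˣ) → ℤˣ // IsKFun k f}

/-- Two real-valued functions on `Q_n` are isomorphic: `f x = ε • g y` with
`y i = α i * x (σ i)` for a sign `ε`, a vector `α ∈ {-1,1}^n` and a permutation `σ`. -/
def Isom {n : ℕ} (f g : (Fin n → ℤˣ) → ℝ) : Prop :=
  ∃ (ε : ℤˣ) (α : Fin n → ℤˣ) (σ : Equiv.Perm (Fin n)),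
    ∀ x, f x = ((ε : ℤ) : ℝ) * g (fun i => α i * x (σ i))

/-- View a Boolean (`ℤˣ`-valued) function as real-valued. -/
noncomputable def toReal {n : ℕ} (f : (Fin n → ℤˣ) → ℤˣ) : (Fin n → ℤˣ) → ℝ :=
  fun x => ((f x : ℤ) : ℝ)

/-- `G n k`: the number of isomorphism classes of `k`-functions on `Q_n`. -/
noncomputable def numIsoKFun (n k : ℕ) : ℕ :=
  Nat.card (Quot fun (f g : {f : (Fin n → ℤˣ) → ℤˣ // IsKFun k f}) =>
    Isom (toReal f.1) (toReal g.1))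

/- ## helpers -/

def sensSet {n : ℕ} (f : (Fin n → ℤˣ) → ℤˣ) (x : Fin n → ℤˣ) : Set (Fin n) :=
  {i : Fin n | f (flipCoord x i) ≠ f x}

lemma isKFun_iff {n k : ℕ} (f : (Fin n → ℤˣ) → ℤˣ) :
    IsKFun k f ↔ ∀ x, (sensSet f x).ncard = k := Iff.rfl

def FullSupp {n : ℕ} (f : (Fin n → ℤˣ) → ℤˣ) : Prop :=
  ∀ i : Fin n, ∃ x, f (flipCoord x i) ≠ f x

lemma units_ne_iff {a b : ℤˣ} : a ≠ b ↔ a = -b := by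
  rcases Int.units_eq_one_or a with ha | ha <;> rcases Int.units_eq_one_or b with hb | hb <;>
    simp [ha, hb]

lemma flip_apply_same {n : ℕ} (x : Fin n → ℤˣ) (i : Fin n) :
    flipCoord x i i = -(x i) := Function.update_self i _ x

lemma flip_apply_ne {n : ℕ} (x : Fin n → ℤˣ) {i j : Fin n} (h : j ≠ i) :
    flipCoord x i j = x j := Function.update_of_ne h _ x

lemma comp_flip_of_injective {m l : ℕ} (e : Fin m → Fin l) (he : Function.Injective e)
    (x : Fin l → ℤˣ) (i : Fin m) :
    (fun j => (flipCoord x (e i)) (e j)) = flipCoord (fun j => x (e j)) i := by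
  funext j
  simp [flipCoord, Function.update_apply, he.eq_iff]

lemma comp_flip_of_ne {m l : ℕ} (e : Fin m → Fin l) (p : Fin l) (hp : ∀ j, e j ≠ p)
    (x : Fin l → ℤˣ) :
    (fun j => (flipCoord x p) (e j)) = fun j => x (e j) := by
  funext j
  simp [flipCoord, Function.update_apply, hp j]

/-- `IsomU`: Boolean version of `Isom`. -/
def IsomU {n : ℕ} (f g : (Fin n → ℤˣ) → ℤˣ) : Prop :=
  ∃ (ε : ℤˣ) (α : Fin n → ℤˣ) (σ : Equiv.Perm (Fin n)),
    ∀ x, f x = ε * g (fun i => α i * x (σ i))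

lemma isom_toReal_iff {n : ℕ} (f g : (Fin n → ℤˣ) → ℤˣ) :
    Isom (toReal f) (toReal g) ↔ IsomU f g := by
  constructor
  · rintro ⟨ε, α, σ, h⟩
    refine ⟨ε, α, σ, fun x => ?_⟩
    have hx := h x
    apply Units.ext
    have : ((f x : ℤ) : ℝ) = (((ε * g fun i => α i * x (σ i) : ℤˣ) : ℤ) : ℝ) := by
      simp only [toReal] at hx
      rw [hx]; push_cast; ring
    exact_mod_cast this
  · rintro ⟨ε, α, σ, h⟩
    refine ⟨ε, α, σ, fun x => ?_⟩
    have hx := h x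
    simp only [toReal, hx]
    push_cast
    ring

lemma isomU_refl {n : ℕ} (f : (Fin n → ℤˣ) → ℤˣ) : IsomU f f := by
  refine ⟨1, fun _ => 1, Equiv.refl _, fun x => by simp⟩

lemma isomU_symm {n : ℕ} {f g : (Fin n → ℤˣ) → ℤˣ} (h : IsomU f g) : IsomU g f := by
  obtain ⟨ε, α, σ, h⟩ := h
  refine ⟨ε, fun i => α (σ.symm i), σ.symm, fun y => ?_⟩
  have := h (fun i => α (σ.symm i) * y (σ.symm i))
  have harg : (fun i => α i * (fun j => α (σ.symm j) * y (σ.symm j)) (σ i)) = y := by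
    funext i
    simp [Equiv.symm_apply_apply, ← mul_assoc, Int.units_mul_self]
  rw [harg] at this
  rw [this, ← mul_assoc, Int.units_mul_self, one_mul]

lemma isomU_trans {n : ℕ} {f g h : (Fin n → ℤˣ) → ℤˣ}
    (h1 : IsomU f g) (h2 : IsomU g h) : IsomU f h := by
  obtain ⟨ε, α, σ, hfg⟩ := h1
  obtain ⟨ε', β, τ, hgh⟩ := h2
  refine ⟨ε * ε', fun i => β i * α (τ i), τ.trans σ, fun x => ?_⟩
  rw [hfg x, hgh (fun i => α i * x (σ i))]
  rw [← mul_assoc]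
  congr 1
  apply congrArg
  funext i
  simp [Equiv.trans_apply, mul_assoc]

example : True := trivial

/- ## adding a dummy coordinate -/

def emb {n : ℕ} (f : (Fin n → ℤˣ) → ℤˣ) : (Fin (n+1) → ℤˣ) → ℤˣ :=
  fun x => f (fun j => x j.castSucc)

lemma castSucc_ne_last {n : ℕ} (j : Fin n) : j.castSucc ≠ Fin.last n :=
  Fin.ne_of_lt (Fin.castSucc_lt_last j)

lemma emb_flip_castSucc {n : ℕ} (f : (Fin n → ℤˣ) → ℤˣ) (x : Fin (n+1) → ℤˣ) (i : Fin n) :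
    emb f (flipCoord x i.castSucc) = f (flipCoord (fun j => x j.castSucc) i) := by
  unfold emb
  rw [comp_flip_of_injective _ (Fin.castSucc_injective n) x i]

lemma emb_flip_last {n : ℕ} (f : (Fin n → ℤˣ) → ℤˣ) (x : Fin (n+1) → ℤˣ) :
    emb f (flipCoord x (Fin.last n)) = emb f x := by
  unfold emb
  rw [comp_flip_of_ne _ _ (fun j => castSucc_ne_last j) x]

lemma emb_isKFun {n k : ℕ} {f : (Fin n → ℤˣ) → ℤˣ} (hf : IsKFun k f) : IsKFun k (emb f) := by
  rw [isKFun_iff]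
  intro x
  have hset : sensSet (emb f) x = Fin.castSucc '' sensSet f (fun j => x j.castSucc) := by
    ext p
    rcases Fin.eq_castSucc_or_eq_last p with ⟨j, rfl⟩ | rfl
    · simp only [sensSet, Set.mem_setOf_eq, Set.mem_image]
      rw [emb_flip_castSucc]
      constructor
      · intro h; exact ⟨j, h, rfl⟩
      · rintro ⟨a, ha, haj⟩
        rw [(Fin.castSucc_injective n) haj] at ha; exact ha
    · simp only [sensSet, Set.mem_setOf_eq, Set.mem_image]
      rw [emb_flip_last]
      simp only [emb_flip_last, ne_eq, not_true_eq_false, not_not, false_iff, not_exists,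
        not_and]
      intro a ha
      exact castSucc_ne_last a
  rw [hset, Set.ncard_image_of_injective _ (Fin.castSucc_injective n)]
  exact hf _

/-- extend a permutation of `Fin n` to `Fin (n+1)` fixing the last coordinate. -/
def extPerm {n : ℕ} (σ : Equiv.Perm (Fin n)) : Equiv.Perm (Fin (n+1)) :=
  finSuccEquivLast.trans ((σ.optionCongr).trans finSuccEquivLast.symm)

lemma extPerm_castSucc {n : ℕ} (σ : Equiv.Perm (Fin n)) (j : Fin n) :
    extPerm σ j.castSucc = (σ j).castSucc := by
  simp [extPerm]

lemma extPerm_last {n : ℕ} (σ : Equiv.Perm (Fin n)) :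
    extPerm σ (Fin.last n) = Fin.last n := by
  simp [extPerm]

lemma emb_isomU {n : ℕ} {f g : (Fin n → ℤˣ) → ℤˣ} (h : IsomU f g) : IsomU (emb f) (emb g) := by
  obtain ⟨ε, α, σ, h⟩ := h
  refine ⟨ε, Fin.lastCases 1 α, extPerm σ, fun x => ?_⟩
  unfold emb
  rw [h (fun j => x j.castSucc)]
  congr 1
  apply congrArg
  funext j
  simp [extPerm_castSucc, Fin.lastCases_castSucc]

/- ## cancellation: isomorphic after adding a dummy coordinate implies isomorphic -/

lemma emb_isomU_cancel {n : ℕ} {f g : (Fin n → ℤˣ) → ℤˣ}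
    (H : IsomU (emb f) (emb g)) : IsomU f g := by
  obtain ⟨ε, α, σ, h⟩ := H
  set a : Fin (n+1) := σ.symm (Fin.last n) with ha_def
  set σ' : Equiv.Perm (Fin (n+1)) := (Equiv.swap a (Fin.last n)).trans σ with hσ'_def
  have hσa : σ a = Fin.last n := by rw [ha_def]; exact Equiv.apply_symm_apply σ _
  have hσ'last : σ' (Fin.last n) = Fin.last n := by
    simp only [hσ'_def, Equiv.trans_apply, Equiv.swap_apply_right]
    exact hσa
  -- the vector read by `g` in `h x`
  set y : (Fin (n+1) → ℤˣ) → (Fin n → ℤˣ) :=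
    fun x j => α j.castSucc * x (σ j.castSucc) with hy_def
  have hyx : ∀ x, emb g (fun i => α i * x (σ i)) = g (y x) := fun _ => rfl
  have hmain : ∀ x, emb f x = ε * g (y x) := by
    intro x; rw [h x, hyx x]
  -- key identity with σ' in place of σ
  have key : ∀ x, emb f x = ε * g (fun j => α j.castSucc * x (σ' j.castSucc)) := by
    by_cases ha : a = Fin.last n
    · intro x
      have hs : ∀ j : Fin n, σ' j.castSucc = σ j.castSucc := by
        intro j; simp [hσ'_def, ha, Equiv.swap_self]
      simp only [hs]
      exact hmain x
    · -- there is a dead coordinate j₀ for g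
      set j₀ : Fin n := a.castPred ha with hj₀_def
      have hcs_j₀ : j₀.castSucc = a := Fin.castSucc_castPred a ha
      have hlast_cs : ∀ j : Fin n, σ j.castSucc = Fin.last n ↔ j = j₀ := by
        intro j
        constructor
        · intro hcontra
          have : j.castSucc = a := by rw [ha_def, ← hcontra, Equiv.symm_apply_apply]
          exact Fin.castSucc_injective n (by rw [this, hcs_j₀])
        · intro hj; subst hj; rw [hcs_j₀, hσa]
      -- g is insensitive at j₀
      have hdead : ∀ w, g (flipCoord w j₀) = g w := by
        intro w
        set x : Fin (n+1) → ℤˣ :=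
          fun q => if hq : σ.symm q = Fin.last n then 1
            else α (σ.symm q) * w ((σ.symm q).castPred hq) with hx_def
        have hyxw : y x = w := by
          funext j
          have h1 : σ.symm (σ j.castSucc) = j.castSucc := Equiv.symm_apply_apply σ _
          have h2 : ¬ (σ.symm (σ j.castSucc) = Fin.last n) := by
            rw [h1]; exact castSucc_ne_last j
          simp only [hy_def, hx_def, dif_neg h2]
          have h3 : ((σ.symm (σ j.castSucc)).castPred h2) = j := by
            apply Fin.castSucc_injective
            rw [Fin.castSucc_castPred, h1]
          rw [h3]
          have h4 : α ((σ.symm (σ j.castSucc))) = α j.castSucc := by rw [h1]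
          rw [h4, ← mul_assoc, Int.units_mul_self, one_mul]
        have hflip : y (flipCoord x (Fin.last n)) = flipCoord (y x) j₀ := by
          funext j
          by_cases hj : j = j₀
          · have e1 : σ j₀.castSucc = Fin.last n := (hlast_cs j₀).mpr rfl
            rw [hj, flip_apply_same (y x) j₀]
            simp only [hy_def, e1, flip_apply_same]
            rw [mul_neg]
          · have e1 : σ j.castSucc ≠ Fin.last n := fun hc => hj ((hlast_cs j).mp hc)
            rw [flip_apply_ne (y x) hj]
            simp only [hy_def, flip_apply_ne x e1]
        have h5 := hmain (flipCoord x (Fin.last n))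
        rw [emb_flip_last, hmain x, hflip, hyxw] at h5
        exact (mul_left_cancel h5).symm
      -- update lemma at j₀
      have hupd : ∀ w c, g (Function.update w j₀ c) = g w := by
        intro w c
        by_cases hc : c = w j₀
        · rw [hc, Function.update_eq_self]
        · rw [units_ne_iff.mp hc]
          exact hdead w
      intro x
      have harg : (fun j => α j.castSucc * x (σ' j.castSucc)) =
          Function.update (y x) j₀ (α a * x (σ (Fin.last n))) := by
        funext j
        by_cases hj : j = j₀
        · have e1 : σ' j₀.castSucc = σ (Fin.last n) := by
            simp only [hσ'_def, Equiv.trans_apply, hcs_j₀, Equiv.swap_apply_left]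
          rw [hj, Function.update_self, e1, hcs_j₀]
        · rw [Function.update_of_ne hj]
          have e1 : σ' j.castSucc = σ j.castSucc := by
            simp only [hσ'_def, Equiv.trans_apply]
            congr 1
            apply Equiv.swap_apply_of_ne_of_ne
            · intro hc; exact hj (Fin.castSucc_injective n (by rw [hc, hcs_j₀]))
            · exact castSucc_ne_last j
          rw [e1]
      rw [harg, hupd]
      exact hmain x
  -- extract a permutation of `Fin n`
  have hne : ∀ j : Fin n, σ' j.castSucc ≠ Fin.last n := by
    intro j hc
    exact castSucc_ne_last j (σ'.injective (hc.trans hσ'last.symm))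
  set m : Fin n → Fin n := fun j => (σ' j.castSucc).castPred (hne j) with hm_def
  have hmcs : ∀ j, (m j).castSucc = σ' j.castSucc := fun j => Fin.castSucc_castPred _ _
  have minj : Function.Injective m := by
    intro j1 j2 hj
    have : σ' j1.castSucc = σ' j2.castSucc := by rw [← hmcs, ← hmcs, hj]
    exact Fin.castSucc_injective n (σ'.injective this)
  set σ₀ : Equiv.Perm (Fin n) := Equiv.ofBijective m (Finite.injective_iff_bijective.mp minj)
    with hσ₀_def
  have hσ₀ : ∀ j, σ₀ j = m j := fun j => rfl
  refine ⟨ε, fun j => α j.castSucc, σ₀, fun u => ?_⟩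
  set x : Fin (n+1) → ℤˣ :=
    fun p => if hp : p = Fin.last n then 1 else u (p.castPred hp) with hx_def
  have hx_cs : ∀ j : Fin n, x j.castSucc = u j := by
    intro j
    simp only [hx_def, dif_neg (castSucc_ne_last j), Fin.castPred_castSucc]
  have h1 : emb f x = f u := by
    unfold emb
    congr 1
    funext j
    exact hx_cs j
  have h2 := key x
  rw [h1] at h2
  rw [h2]
  congr 1
  apply congrArg
  funext j
  have e2 : x (σ' j.castSucc) = u (σ₀ j) := by
    rw [hσ₀, ← hmcs j]; exact hx_cs (m j)
  rw [e2]

/- ## full support functions are not isomorphic to embedded ones -/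

lemma fullSupp_not_isomU_emb {n : ℕ} {F : (Fin (n+1) → ℤˣ) → ℤˣ} {g : (Fin n → ℤˣ) → ℤˣ}
    (hFs : FullSupp F) (H : IsomU F (emb g)) : False := by
  obtain ⟨ε, α, σ, h⟩ := H
  obtain ⟨x, hx⟩ := hFs (σ (Fin.last n))
  apply hx
  rw [h x, h (flipCoord x (σ (Fin.last n)))]
  have harg : (fun i => α i * (flipCoord x (σ (Fin.last n))) (σ i)) =
      flipCoord (fun i => α i * x (σ i)) (Fin.last n) := by
    funext i
    by_cases hi : i = Fin.last n
    · rw [hi, flip_apply_same, flip_apply_same, mul_neg]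
    · rw [flip_apply_ne _ hi, flip_apply_ne x (fun hc => hi (σ.injective hc))]
  rw [harg, emb_flip_last]

/- ## the isomorphism relation on k-functions is an equivalence -/

lemma relK_equivalence (n k : ℕ) :
    Equivalence (fun (f g : {f : (Fin n → ℤˣ) → ℤˣ // IsKFun k f}) =>
      Isom (toReal f.1) (toReal g.1)) := by
  constructor
  · intro f; exact (isom_toReal_iff _ _).mpr (isomU_refl f.1)
  · intro f g h
    exact (isom_toReal_iff _ _).mpr (isomU_symm ((isom_toReal_iff _ _).mp h))
  · intro f g h h1 h2
    exact (isom_toReal_iff _ _).mpr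
      (isomU_trans ((isom_toReal_iff _ _).mp h1) ((isom_toReal_iff _ _).mp h2))

lemma card_lt_of_inj_notsurj {A B : Type*} [Finite B] (φ : A → B)
    (hinj : Function.Injective φ) (b : B) (hb : ∀ a, φ a ≠ b) :
    Nat.card A < Nat.card B := by
  have hle := Nat.card_le_card_of_injective φ hinj
  rcases lt_or_eq_of_le hle with h | h
  · exact h
  · exfalso
    have hbij : Function.Bijective φ := (Nat.bijective_iff_injective_and_card φ).mpr ⟨hinj, h⟩
    obtain ⟨a, ha⟩ := hbij.2 b
    exact hb a ha

lemma step_lt {n k : ℕ} (F : (Fin (n+1) → ℤˣ) → ℤˣ) (hF : IsKFun k F) (hFs : FullSupp F) :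
    numIsoKFun n k < numIsoKFun (n+1) k := by
  classical
  unfold numIsoKFun
  refine card_lt_of_inj_notsurj
    (Quot.map (fun f => ⟨emb f.1, emb_isKFun f.2⟩)
      (fun f g hfg => (isom_toReal_iff _ _).mpr (emb_isomU ((isom_toReal_iff _ _).mp hfg))))
    ?_ (Quot.mk _ ⟨F, hF⟩) ?_
  · intro q1 q2 hq
    obtain ⟨f, rfl⟩ := Quot.exists_rep q1
    obtain ⟨g, rfl⟩ := Quot.exists_rep q2
    have hq' : Quot.mk _ (⟨emb f.1, emb_isKFun f.2⟩ :
        {f : (Fin (n+1) → ℤˣ) → ℤˣ // IsKFun k f}) = Quot.mk _ ⟨emb g.1, emb_isKFun g.2⟩ := hq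
    have h2 := ((relK_equivalence (n+1) k).eqvGen_iff).mp (Quot.eq.mp hq')
    apply Quot.sound
    exact (isom_toReal_iff _ _).mpr (emb_isomU_cancel ((isom_toReal_iff _ _).mp h2))
  · intro q hq
    obtain ⟨g, rfl⟩ := Quot.exists_rep q
    have hq' : Quot.mk _ (⟨emb g.1, emb_isKFun g.2⟩ :
        {f : (Fin (n+1) → ℤˣ) → ℤˣ // IsKFun k f}) = Quot.mk _ ⟨F, hF⟩ := hq
    have h2 := ((relK_equivalence (n+1) k).eqvGen_iff).mp (Quot.eq.mp hq')
    exact fullSupp_not_isomU_emb hFs (isomU_symm ((isom_toReal_iff _ _).mp h2))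

/- ## the doubling construction -/

def inL (n : ℕ) (i : Fin n) : Fin (2*n+2) := ⟨i.1, by have := i.2; omega⟩
def inR (n : ℕ) (i : Fin n) : Fin (2*n+2) := ⟨n + i.1, by have := i.2; omega⟩
def cA (n : ℕ) : Fin (2*n+2) := ⟨2*n, by omega⟩
def cB (n : ℕ) : Fin (2*n+2) := ⟨2*n+1, by omega⟩

lemma inL_inj {n : ℕ} : Function.Injective (inL n) := by
  intro a b h
  have h2 : (inL n a).1 = (inL n b).1 := congrArg Fin.val h
  simp only [inL] at h2
  exact Fin.ext h2

lemma inR_inj {n : ℕ} : Function.Injective (inR n) := by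
  intro a b h
  have h2 : (inR n a).1 = (inR n b).1 := congrArg Fin.val h
  simp only [inR] at h2
  exact Fin.ext (by omega)

lemma inL_ne_inR {n : ℕ} (i j : Fin n) : inL n i ≠ inR n j :=
  Fin.ne_of_val_ne (by have := i.2; simp only [inL, inR]; omega)

lemma inR_ne_inL {n : ℕ} (i j : Fin n) : inR n i ≠ inL n j :=
  (inL_ne_inR j i).symm

lemma inL_ne_cA {n : ℕ} (i : Fin n) : inL n i ≠ cA n :=
  Fin.ne_of_val_ne (by have := i.2; simp only [inL, cA]; omega)

lemma inL_ne_cB {n : ℕ} (i : Fin n) : inL n i ≠ cB n :=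
  Fin.ne_of_val_ne (by have := i.2; simp only [inL, cB]; omega)

lemma inR_ne_cA {n : ℕ} (i : Fin n) : inR n i ≠ cA n :=
  Fin.ne_of_val_ne (by have := i.2; simp only [inR, cA]; omega)

lemma inR_ne_cB {n : ℕ} (i : Fin n) : inR n i ≠ cB n :=
  Fin.ne_of_val_ne (by have := i.2; simp only [inR, cB]; omega)

lemma cA_ne_cB {n : ℕ} : cA n ≠ cB n :=
  Fin.ne_of_val_ne (by simp only [cA, cB]; omega)

lemma cB_ne_cA {n : ℕ} : cB n ≠ cA n := cA_ne_cB.symm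

lemma fin_cases' {n : ℕ} (p : Fin (2*n+2)) :
    (∃ i, p = inL n i) ∨ (∃ j, p = inR n j) ∨ p = cA n ∨ p = cB n := by
  rcases p with ⟨pv, hp⟩
  by_cases h1 : pv < n
  · exact Or.inl ⟨⟨pv, h1⟩, rfl⟩
  by_cases h2 : pv < 2*n
  · refine Or.inr (Or.inl ⟨⟨pv - n, by omega⟩, Fin.ext ?_⟩)
    simp only [inR]
    omega
  by_cases h3 : pv = 2*n
  · exact Or.inr (Or.inr (Or.inl (Fin.ext (by simp only [cA]; omega))))
  · exact Or.inr (Or.inr (Or.inr (Fin.ext (by simp only [cB]; omega))))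

def uP {n : ℕ} (x : Fin (2*n+2) → ℤˣ) : Fin n → ℤˣ := fun j => x (inL n j)
def vP {n : ℕ} (x : Fin (2*n+2) → ℤˣ) : Fin n → ℤˣ := fun j => x (inR n j)

def dbl {n : ℕ} (f : (Fin n → ℤˣ) → ℤˣ) (x : Fin (2*n+2) → ℤˣ) : ℤˣ :=
  if f (uP x) = f (vP x) then x (cA n) * f (uP x) else x (cB n) * f (uP x)

section DblLemmas

variable {n : ℕ} (f : (Fin n → ℤˣ) → ℤˣ) (x : Fin (2*n+2) → ℤˣ)

lemma uP_flipL (i : Fin n) : uP (flipCoord x (inL n i)) = flipCoord (uP x) i :=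
  comp_flip_of_injective _ inL_inj x i

lemma vP_flipL (i : Fin n) : vP (flipCoord x (inL n i)) = vP x :=
  comp_flip_of_ne _ _ (fun j => inR_ne_inL j i) x

lemma uP_flipR (j : Fin n) : uP (flipCoord x (inR n j)) = uP x :=
  comp_flip_of_ne _ _ (fun i => inL_ne_inR i j) x

lemma vP_flipR (j : Fin n) : vP (flipCoord x (inR n j)) = flipCoord (vP x) j :=
  comp_flip_of_injective _ inR_inj x j

lemma uP_flipA : uP (flipCoord x (cA n)) = uP x :=
  comp_flip_of_ne _ _ (fun i => inL_ne_cA i) x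

lemma vP_flipA : vP (flipCoord x (cA n)) = vP x :=
  comp_flip_of_ne _ _ (fun i => inR_ne_cA i) x

lemma uP_flipB : uP (flipCoord x (cB n)) = uP x :=
  comp_flip_of_ne _ _ (fun i => inL_ne_cB i) x

lemma vP_flipB : vP (flipCoord x (cB n)) = vP x :=
  comp_flip_of_ne _ _ (fun i => inR_ne_cB i) x

lemma dbl_apply : dbl f x =
    if f (uP x) = f (vP x) then x (cA n) * f (uP x) else x (cB n) * f (uP x) := rfl

lemma dbl_flipL (i : Fin n) : dbl f (flipCoord x (inL n i)) =
    if f (flipCoord (uP x) i) = f (vP x) then x (cA n) * f (flipCoord (uP x) i)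
    else x (cB n) * f (flipCoord (uP x) i) := by
  rw [dbl_apply, uP_flipL, vP_flipL, flip_apply_ne x (Ne.symm (inL_ne_cA i)),
    flip_apply_ne x (Ne.symm (inL_ne_cB i))]

lemma dbl_flipR (j : Fin n) : dbl f (flipCoord x (inR n j)) =
    if f (uP x) = f (flipCoord (vP x) j) then x (cA n) * f (uP x)
    else x (cB n) * f (uP x) := by
  rw [dbl_apply, uP_flipR, vP_flipR, flip_apply_ne x (Ne.symm (inR_ne_cA j)),
    flip_apply_ne x (Ne.symm (inR_ne_cB j))]

lemma dbl_flipA : dbl f (flipCoord x (cA n)) =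
    if f (uP x) = f (vP x) then (-(x (cA n))) * f (uP x) else x (cB n) * f (uP x) := by
  rw [dbl_apply, uP_flipA, vP_flipA, flip_apply_same, flip_apply_ne x cB_ne_cA]

lemma dbl_flipB : dbl f (flipCoord x (cB n)) =
    if f (uP x) = f (vP x) then x (cA n) * f (uP x) else (-(x (cB n))) * f (uP x) := by
  rw [dbl_apply, uP_flipB, vP_flipB, flip_apply_same, flip_apply_ne x cA_ne_cB]

end DblLemmas

lemma unit_neg_ne (a : ℤˣ) : -a ≠ a := by
  rcases Int.units_eq_one_or a with h | h <;> rw [h] <;> decide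

lemma unit_neg_mul_ne (z a : ℤˣ) : -z * a ≠ z * a := by
  rcases Int.units_eq_one_or z with h | h <;> rcases Int.units_eq_one_or a with h2 | h2 <;>
    rw [h, h2] <;> decide

lemma unit_mul_ne_iff {z a b : ℤˣ} : (¬ (z * b = z * a)) ↔ ¬ (b = a) := by
  constructor
  · intro h hba; exact h (by rw [hba])
  · intro h hba; exact h (mul_left_cancel hba)

lemma dbl_isKFun {n k : ℕ} {f : (Fin n → ℤˣ) → ℤˣ} (hf : IsKFun k f) :
    IsKFun (k+1) (dbl f) := by
  rw [isKFun_iff]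
  intro x
  have hnm : ∀ (e : Fin n → Fin (2*n+2)) (c : Fin (2*n+2)) (S : Set (Fin n)),
      (∀ i, e i ≠ c) → c ∉ e '' S := by
    rintro e c S hc ⟨a, -, ha⟩; exact hc a ha
  have hku : (sensSet f (uP x)).ncard = k := hf (uP x)
  have hkv : (sensSet f (vP x)).ncard = k := hf (vP x)
  by_cases hab : f (uP x) = f (vP x) <;> by_cases hz : x (cA n) = x (cB n)
  · -- B1 : equal values, equal signs
    have hset : sensSet (dbl f) x = insert (cA n) (inL n '' sensSet f (uP x)) := by
      ext p
      rcases fin_cases' p with ⟨i, rfl⟩ | ⟨j, rfl⟩ | rfl | rfl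
      · simp only [sensSet, Set.mem_setOf_eq, Set.mem_insert_iff, Set.mem_image, ne_eq]
        rw [dbl_flipL, dbl_apply, if_pos hab, ← hab, ← hz, ite_self, unit_mul_ne_iff]
        constructor
        · intro h; exact Or.inr ⟨i, h, rfl⟩
        · rintro (hc | ⟨a, ha, hai⟩)
          · exact absurd hc (inL_ne_cA i)
          · obtain rfl := inL_inj hai; exact ha
      · simp only [sensSet, Set.mem_setOf_eq, Set.mem_insert_iff, Set.mem_image, ne_eq]
        rw [dbl_flipR, dbl_apply, if_pos hab, ← hz, ite_self]
        constructor
        · intro hne; exact absurd rfl hne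
        · rintro (hc | ⟨a, -, ha⟩)
          · exact absurd hc (inR_ne_cA j)
          · exact absurd ha (inL_ne_inR a j)
      · simp only [sensSet, Set.mem_setOf_eq, Set.mem_insert_iff, Set.mem_image, ne_eq]
        rw [dbl_flipA, dbl_apply, if_pos hab, if_pos hab]
        constructor
        · intro _; exact Or.inl trivial
        · intro _; exact unit_neg_mul_ne _ _
      · simp only [sensSet, Set.mem_setOf_eq, Set.mem_insert_iff, Set.mem_image, ne_eq]
        rw [dbl_flipB, dbl_apply, if_pos hab, if_pos hab]
        constructor
        · intro hne; exact absurd rfl hne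
        · rintro (hc | ⟨a, -, ha⟩)
          · exact absurd hc cB_ne_cA
          · exact absurd ha (inL_ne_cB a)
    rw [hset, Set.ncard_insert_of_notMem (hnm _ _ _ (fun i => inL_ne_cA i)) (Set.toFinite _),
      Set.ncard_image_of_injective _ inL_inj, hku]
  · -- B2 : equal values, opposite signs
    have hz' : x (cA n) = -(x (cB n)) := units_ne_iff.mp hz
    have hset : sensSet (dbl f) x = insert (cA n) (inR n '' sensSet f (vP x)) := by
      ext p
      rcases fin_cases' p with ⟨i, rfl⟩ | ⟨j, rfl⟩ | rfl | rfl
      · simp only [sensSet, Set.mem_setOf_eq, Set.mem_insert_iff, Set.mem_image, ne_eq]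
        rw [dbl_flipL, dbl_apply, if_pos hab, ← hab]
        have hval : (if f (flipCoord (uP x) i) = f (uP x)
            then x (cA n) * f (flipCoord (uP x) i)
            else x (cB n) * f (flipCoord (uP x) i)) = x (cA n) * f (uP x) := by
          by_cases hb : f (flipCoord (uP x) i) = f (uP x)
          · rw [if_pos hb, hb]
          · rw [if_neg hb, units_ne_iff.mp hb, hz', mul_neg, neg_mul]
        rw [hval]
        constructor
        · intro hne; exact absurd rfl hne
        · rintro (hc | ⟨a, -, ha⟩)
          · exact absurd hc (inL_ne_cA i)
          · exact absurd ha (inR_ne_inL a i)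
      · simp only [sensSet, Set.mem_setOf_eq, Set.mem_insert_iff, Set.mem_image, ne_eq]
        rw [dbl_flipR, dbl_apply, if_pos hab, hab]
        constructor
        · intro hne
          refine Or.inr ⟨j, ?_, rfl⟩
          intro hb
          apply hne
          rw [if_pos hb.symm]
        · rintro (hc | ⟨a, ha, hai⟩)
          · exact absurd hc (inR_ne_cA j)
          · obtain rfl := inR_inj hai
            rw [if_neg (fun hh => ha hh.symm), hz']
            exact fun hh => unit_neg_mul_ne _ _ hh.symm
      · simp only [sensSet, Set.mem_setOf_eq, Set.mem_insert_iff, Set.mem_image, ne_eq]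
        rw [dbl_flipA, dbl_apply, if_pos hab, if_pos hab]
        constructor
        · intro _; exact Or.inl trivial
        · intro _; exact unit_neg_mul_ne _ _
      · simp only [sensSet, Set.mem_setOf_eq, Set.mem_insert_iff, Set.mem_image, ne_eq]
        rw [dbl_flipB, dbl_apply, if_pos hab, if_pos hab]
        constructor
        · intro hne; exact absurd rfl hne
        · rintro (hc | ⟨a, -, ha⟩)
          · exact absurd hc cB_ne_cA
          · exact absurd ha (inR_ne_cB a)
    rw [hset, Set.ncard_insert_of_notMem (hnm _ _ _ (fun i => inR_ne_cA i)) (Set.toFinite _),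
      Set.ncard_image_of_injective _ inR_inj, hkv]
  · -- B3 : unequal values, equal signs
    have hset : sensSet (dbl f) x = insert (cB n) (inL n '' sensSet f (uP x)) := by
      ext p
      rcases fin_cases' p with ⟨i, rfl⟩ | ⟨j, rfl⟩ | rfl | rfl
      · simp only [sensSet, Set.mem_setOf_eq, Set.mem_insert_iff, Set.mem_image, ne_eq]
        rw [dbl_flipL, dbl_apply, if_neg hab, ← hz]
        have hab2 : f (vP x) = -(f (uP x)) := units_ne_iff.mp (fun hh => hab hh.symm)
        have hval : (if f (flipCoord (uP x) i) = f (vP x)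
            then x (cA n) * f (flipCoord (uP x) i)
            else x (cA n) * f (flipCoord (uP x) i)) = x (cA n) * f (flipCoord (uP x) i) :=
          ite_self _
        rw [hval, unit_mul_ne_iff]
        constructor
        · intro h; exact Or.inr ⟨i, h, rfl⟩
        · rintro (hc | ⟨a, ha, hai⟩)
          · exact absurd hc (inL_ne_cB i)
          · obtain rfl := inL_inj hai; exact ha
      · simp only [sensSet, Set.mem_setOf_eq, Set.mem_insert_iff, Set.mem_image, ne_eq]
        rw [dbl_flipR, dbl_apply, if_neg hab, hz, ite_self]
        constructor
        · intro hne; exact absurd rfl hne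
        · rintro (hc | ⟨a, -, ha⟩)
          · exact absurd hc (inR_ne_cB j)
          · exact absurd ha (inL_ne_inR a j)
      · simp only [sensSet, Set.mem_setOf_eq, Set.mem_insert_iff, Set.mem_image, ne_eq]
        rw [dbl_flipA, dbl_apply, if_neg hab, if_neg hab]
        constructor
        · intro hne; exact absurd rfl hne
        · rintro (hc | ⟨a, -, ha⟩)
          · exact absurd hc cA_ne_cB
          · exact absurd ha (inL_ne_cA a)
      · simp only [sensSet, Set.mem_setOf_eq, Set.mem_insert_iff, Set.mem_image, ne_eq]
        rw [dbl_flipB, dbl_apply, if_neg hab, if_neg hab]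
        constructor
        · intro _; exact Or.inl trivial
        · intro _; exact unit_neg_mul_ne _ _
    rw [hset, Set.ncard_insert_of_notMem (hnm _ _ _ (fun i => inL_ne_cB i)) (Set.toFinite _),
      Set.ncard_image_of_injective _ inL_inj, hku]
  · -- B4 : unequal values, opposite signs
    have hz' : x (cA n) = -(x (cB n)) := units_ne_iff.mp hz
    have hab2 : f (vP x) = -(f (uP x)) := units_ne_iff.mp (fun hh => hab hh.symm)
    have hset : sensSet (dbl f) x = insert (cB n) (inR n '' sensSet f (vP x)) := by
      ext p
      rcases fin_cases' p with ⟨i, rfl⟩ | ⟨j, rfl⟩ | rfl | rfl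
      · simp only [sensSet, Set.mem_setOf_eq, Set.mem_insert_iff, Set.mem_image, ne_eq]
        rw [dbl_flipL, dbl_apply, if_neg hab]
        have hval : (if f (flipCoord (uP x) i) = f (vP x)
            then x (cA n) * f (flipCoord (uP x) i)
            else x (cB n) * f (flipCoord (uP x) i)) = x (cB n) * f (uP x) := by
          by_cases hb : f (flipCoord (uP x) i) = f (uP x)
          · rw [if_neg (fun hh => hab (hb.symm.trans hh)), hb]
          · have hb2 : f (flipCoord (uP x) i) = -(f (uP x)) := units_ne_iff.mp hb
            have hcond : f (flipCoord (uP x) i) = f (vP x) := by rw [hb2, hab2]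
            rw [if_pos hcond, hb2, hz', mul_neg, neg_mul, neg_neg]
        rw [hval]
        constructor
        · intro hne; exact absurd rfl hne
        · rintro (hc | ⟨a, -, ha⟩)
          · exact absurd hc (inL_ne_cB i)
          · exact absurd ha (inR_ne_inL a i)
      · simp only [sensSet, Set.mem_setOf_eq, Set.mem_insert_iff, Set.mem_image, ne_eq]
        rw [dbl_flipR, dbl_apply, if_neg hab]
        constructor
        · intro hne
          refine Or.inr ⟨j, ?_, rfl⟩
          intro hbv
          apply hne
          rw [if_neg (fun hh => hab (hh.trans hbv))]
        · rintro (hc | ⟨a, ha, hai⟩)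
          · exact absurd hc (inR_ne_cB j)
          · obtain rfl := inR_inj hai
            have h1 : f (uP x) = f (flipCoord (vP x) a) := by
              rw [units_ne_iff.mp ha]
              exact units_ne_iff.mp hab
            rw [if_pos h1, hz']
            exact unit_neg_mul_ne _ _
      · simp only [sensSet, Set.mem_setOf_eq, Set.mem_insert_iff, Set.mem_image, ne_eq]
        rw [dbl_flipA, dbl_apply, if_neg hab, if_neg hab]
        constructor
        · intro hne; exact absurd rfl hne
        · rintro (hc | ⟨a, -, ha⟩)
          · exact absurd hc cA_ne_cB
          · exact absurd ha (inR_ne_cA a)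
      · simp only [sensSet, Set.mem_setOf_eq, Set.mem_insert_iff, Set.mem_image, ne_eq]
        rw [dbl_flipB, dbl_apply, if_neg hab, if_neg hab]
        constructor
        · intro _; exact Or.inl trivial
        · intro _; exact unit_neg_mul_ne _ _
    rw [hset, Set.ncard_insert_of_notMem (hnm _ _ _ (fun i => inR_ne_cB i)) (Set.toFinite _),
      Set.ncard_image_of_injective _ inR_inj, hkv]

/- ## witnesses : full support of the doubling -/

def assemble {n : ℕ} (u v : Fin n → ℤˣ) (z1 z2 : ℤˣ) : Fin (2*n+2) → ℤˣ :=
  fun p => if h1 : p.1 < n then u ⟨p.1, h1⟩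
    else if h2 : p.1 < 2*n then v ⟨p.1 - n, by omega⟩
    else if p.1 = 2*n then z1 else z2

lemma uP_assemble {n : ℕ} (u v : Fin n → ℤˣ) (z1 z2 : ℤˣ) :
    uP (assemble u v z1 z2) = u := by
  funext j
  have hj := j.2
  simp only [uP, assemble, inL]
  exact dif_pos hj

lemma vP_assemble {n : ℕ} (u v : Fin n → ℤˣ) (z1 z2 : ℤˣ) :
    vP (assemble u v z1 z2) = v := by
  funext j
  have hj := j.2
  simp only [vP, assemble, inR]
  simp only [show ¬ (n + j.1 < n) by omega, show n + j.1 < 2*n by omega, dite_false,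
    dite_true, ↓reduceDIte]
  congr 1
  apply Fin.ext
  show n + j.1 - n = j.1
  omega

lemma assemble_cA {n : ℕ} (u v : Fin n → ℤˣ) (z1 z2 : ℤˣ) :
    assemble u v z1 z2 (cA n) = z1 := by
  simp only [assemble, cA]
  rw [dif_neg (by omega), dif_neg (by omega)]
  simp

lemma assemble_cB {n : ℕ} (u v : Fin n → ℤˣ) (z1 z2 : ℤˣ) :
    assemble u v z1 z2 (cB n) = z2 := by
  simp only [assemble, cB]
  simp only [show ¬ (2*n+1 < n) by omega, show ¬ (2*n+1 < 2*n) by omega,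
    show ¬ (2*n+1 = 2*n) by omega, dite_false, ite_false, ↓reduceDIte, ↓reduceIte]

lemma dbl_fullSupp {n k : ℕ} {f : (Fin n → ℤˣ) → ℤˣ} (hk : 1 ≤ k)
    (hf : IsKFun k f) (hfs : FullSupp f) : FullSupp (dbl f) := by
  intro p
  rcases fin_cases' p with ⟨i, rfl⟩ | ⟨j, rfl⟩ | rfl | rfl
  · obtain ⟨w, hw⟩ := hfs i
    refine ⟨assemble w w 1 1, ?_⟩
    rw [dbl_flipL, dbl_apply, uP_assemble, vP_assemble, assemble_cA, assemble_cB]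
    rw [if_pos rfl, if_neg hw, one_mul, one_mul]
    exact hw
  · obtain ⟨w, hw⟩ := hfs j
    refine ⟨assemble w w 1 (-1), ?_⟩
    rw [dbl_flipR, dbl_apply, uP_assemble, vP_assemble, assemble_cA, assemble_cB]
    rw [if_pos rfl, if_neg (fun hh => hw hh.symm)]
    exact unit_neg_mul_ne 1 (f w)
  · refine ⟨assemble (fun _ => 1) (fun _ => 1) 1 1, ?_⟩
    rw [dbl_flipA, dbl_apply, uP_assemble, vP_assemble, assemble_cA, assemble_cB]
    rw [if_pos rfl, if_pos rfl]
    exact unit_neg_mul_ne 1 _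
  · have h2 : (sensSet f (fun _ => 1)).Nonempty := by
      apply Set.nonempty_of_ncard_ne_zero
      have hk' : (sensSet f (fun _ => 1)).ncard = k := hf _
      omega
    obtain ⟨i, hi⟩ := h2
    have hi' : f (flipCoord (fun _ => 1) i) ≠ f (fun _ => 1) := hi
    refine ⟨assemble (fun _ => 1) (flipCoord (fun _ => 1) i) 1 1, ?_⟩
    rw [dbl_flipB, dbl_apply, uP_assemble, vP_assemble, assemble_cA, assemble_cB]
    rw [if_neg (fun hh => hi' hh.symm), if_neg (fun hh => hi' hh.symm)]
    exact unit_neg_mul_ne 1 _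

/- ## the extremal k-functions -/

lemma exists_F : ∀ j : ℕ, ∃ F : (Fin (3*2^j - 2) → ℤˣ) → ℤˣ,
    IsKFun (j+1) F ∧ FullSupp F := by
  intro j
  induction j with
  | zero =>
    have e : 3*2^0 - 2 = 1 := by norm_num
    rw [e]
    refine ⟨fun x => x 0, ?_, ?_⟩
    · rw [isKFun_iff]
      intro x
      have hs : sensSet (fun x : Fin 1 → ℤˣ => x 0) x = Set.univ := by
        ext i
        have hi0 : i = 0 := Subsingleton.elim i 0
        simp only [sensSet, Set.mem_setOf_eq, Set.mem_univ, iff_true]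
        rw [hi0, flip_apply_same]
        exact unit_neg_ne _
      rw [hs, Set.ncard_univ, Nat.card_eq_fintype_card, Fintype.card_fin]
    · intro i
      refine ⟨fun _ => 1, ?_⟩
      have hi0 : i = 0 := Subsingleton.elim i 0
      simp only
      rw [hi0, flip_apply_same]
      exact unit_neg_ne _
  | succ j ih =>
    obtain ⟨f, hf, hfs⟩ := ih
    have e : 3*2^(j+1) - 2 = 2*(3*2^j - 2) + 2 := by
      have h1 : 1 ≤ 2^j := Nat.one_le_two_pow
      rw [pow_succ]
      omega
    rw [e]
    exact ⟨dbl f, dbl_isKFun hf, dbl_fullSupp (by omega) hf hfs⟩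

lemma step_lt' {n m k : ℕ} (hm : m = n + 1) (F : (Fin m → ℤˣ) → ℤˣ)
    (hF : IsKFun k F) (hFs : FullSupp F) : numIsoKFun n k < numIsoKFun m k := by
  subst hm
  exact step_lt F hF hFs

/-- For `k ≥ 2`, the sequence `(G(n,k))` is not yet constant at `3·2^(k-1) - 3`. -/
theorem numIsoKFun_strict_increase (k : ℕ) (hk : 2 ≤ k) :
    numIsoKFun (3 * 2 ^ (k - 1) - 3) k < numIsoKFun (3 * 2 ^ (k - 1) - 2) k := by
  obtain ⟨F, hF, hFs⟩ := exists_F (k-1)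
  have hk1 : k - 1 + 1 = k := by omega
  rw [hk1] at hF
  have hp : 2 ≤ 2^(k-1) := by
    calc 2 = 2^1 := rfl
    _ ≤ 2^(k-1) := Nat.pow_le_pow_right (by norm_num) (by omega)
  exact step_lt' (by omega) F hF hFs
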